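/- Consider m parallel links with affine latencies ℓᵢ(x) = aᵢ·x + bᵢ, and let f* be an optimal flow for rate r̄ with equal marginal costs on used links. Let L = max over used i of ℓᵢ(fᵢ*). Then the optimal cost satisfies ∑ᵢ fᵢ*·ℓᵢ(fᵢ*) ≥ (L/2)·r̄, and consequently r̄·L / (∑ᵢ fᵢ*·ℓᵢ(fᵢ*)) ≤ 2. -/
import Mathlib


/-- m parallel links with affine latencies ℓᵢ(x) = aᵢx + bᵢ (aᵢ, bᵢ ≥ 0), and an optimal
flow f* for rate rbar (equal marginal costs μ on used links, bᵢ ≥ μ on unused links). If k is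
a used link attaining the maximum latency L over used links, then the optimal cost
∑ fᵢ*·ℓᵢ(fᵢ*) is at least (L/2)·rbar, and consequently rbar·L / (∑ fᵢ*·ℓᵢ(fᵢ*)) ≤ 2. -/
theorem stmt7 (m : ℕ) (a b f : Fin m → ℝ) (rbar : ℝ)
    (ha : ∀ i, 0 ≤ a i) (hb : ∀ i, 0 ≤ b i) (hf : ∀ i, 0 ≤ f i)
    (hsum : ∑ i, f i = rbar)
    (μ : ℝ) (hμ : ∀ i, 0 < f i → 2 * a i * f i + b i = μ)
    (hunused : ∀ i, f i = 0 → μ ≤ b i)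
    (k : Fin m) (hk : 0 < f k) (L : ℝ)
    (hL : L = a k * f k + b k)
    (hmax : ∀ i, 0 < f i → a i * f i + b i ≤ L) :
    (L / 2) * rbar ≤ ∑ i, f i * (a i * f i + b i) ∧
    rbar * L / (∑ i, f i * (a i * f i + b i)) ≤ 2 := by
  have hLμ : L ≤ μ := by
    have := hμ k hk
    nlinarith [ha k, hb k, hk]
  have hL0 : 0 ≤ L := by
    rw [hL]
    nlinarith [ha k, hb k, hk.le]
  have hterm : ∀ i, f i * (μ / 2) ≤ f i * (a i * f i + b i) := by
    intro i
    rcases eq_or_lt_of_le (hf i) with h | h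
    · simp [← h]
    · have := hμ i h
      nlinarith [hb i, h.le]
  have hmain : (L / 2) * rbar ≤ ∑ i, f i * (a i * f i + b i) := by
    calc (L / 2) * rbar ≤ (μ / 2) * rbar := by
          have hr : 0 ≤ rbar := hsum ▸ Finset.sum_nonneg fun i _ => hf i
          nlinarith
      _ = ∑ i, f i * (μ / 2) := by rw [← hsum, Finset.mul_sum]; simp [mul_comm]
      _ ≤ _ := Finset.sum_le_sum fun i _ => hterm i
  refine ⟨hmain, ?_⟩
  have hC0 : 0 ≤ ∑ i, f i * (a i * f i + b i) :=
    Finset.sum_nonneg fun i _ => mul_nonneg (hf i) (by nlinarith [ha i, hb i, hf i])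
  rcases eq_or_lt_of_le hC0 with h | h
  · simp [← h]
  · rw [div_le_iff₀ h]
    nlinarith
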